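/- Let φ : H ⥤q G be a prefunctor of quivers. Then the induced functor Paths H ⥤ Paths G between the free categories, which sends each path in H to its image path in G, is ULF. -/

import Mathlib

open CategoryTheory Quiver

universe v u v' u' w w'

/-- A functor `p : D ⥤ C` has the unique lifting of factorizations property (is ULF) if
every factorization of the image of a morphism lifts uniquely. -/
def IsULF {D : Type u} {C : Type u'} [Category.{v} D] [Category.{v'} C] (p : D ⥤ C) : Prop :=
  ∀ ⦃X Y : D⦄ (α : X ⟶ Y) ⦃B : C⦄ (u : p.obj X ⟶ B) (v : B ⟶ p.obj Y),
    p.map α = u ≫ v →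
    ∃! t : Σ (Z : D), (X ⟶ Z) × (Z ⟶ Y),
      ∃ e : p.obj t.1 = B,
        t.2.1 ≫ t.2.2 = α ∧ p.map t.2.1 ≫ eqToHom e = u ∧ p.map t.2.2 = eqToHom e ≫ v

/-- The functor between free categories induced by a prefunctor of quivers,
sending each path to its image path. -/
def pathsFunctor {H : Type u} {G : Type u'} [Quiver.{v + 1} H] [Quiver.{v' + 1} G]
    (φ : H ⥤q G) : Paths H ⥤ Paths G where
  obj X := φ.obj X
  map f := φ.mapPath f
  map_id _ := rfl
  map_comp f g := φ.mapPath_comp f g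

/-- The functor between free categories induced by a prefunctor of quivers is ULF. -/

lemma mapPath_length {H : Type u} {G : Type u'} [Quiver.{v+1} H] [Quiver.{v'+1} G]
    (φ : H ⥤q G) : ∀ {X Y : H} (p : Path X Y), (φ.mapPath p).length = p.length
  | _, _, Path.nil => rfl
  | _, _, Path.cons p _ => congrArg Nat.succ (mapPath_length φ p)

/-- Unique splitting of a path given the length of the second factor. -/
lemma path_split_unique {H : Type u} [Quiver.{v+1} H] {X Y : H} :
    ∀ {Z Z' : H} (γ : Path Z Y) (γ' : Path Z' Y) (β : Path X Z) (β' : Path X Z'),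
      β.comp γ = β'.comp γ' → γ.length = γ'.length →
      Z = Z' ∧ HEq β β' ∧ HEq γ γ'
  | _, Z', Path.nil, γ', β, β', hc, hl => by
      obtain rfl := (Path.eq_of_length_zero γ' hl.symm).symm
      obtain rfl := Path.eq_nil_of_length_zero γ' hl.symm
      simp only [Path.comp_nil] at hc
      exact ⟨rfl, heq_of_eq hc, HEq.rfl⟩
  | _, Z', Path.cons γ e, γ', β, β', hc, hl => by
      cases γ' with
      | nil => simp at hl
      | cons δ' e' =>
        simp only [Path.comp_cons] at hc
        injection hc with h1 h2 h3 h4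
        subst h1
        obtain ⟨rfl, hβ, hγ⟩ := path_split_unique γ δ' β β' (eq_of_heq h3)
          (by simpa using hl)
        exact ⟨rfl, hβ, by rw [eq_of_heq hγ, eq_of_heq h4]⟩

lemma path_split_exists {H : Type u} {G : Type u'} [Quiver.{v+1} H] [Quiver.{v'+1} G]
    (φ : H ⥤q G) : ∀ {X Y : H} {B : G} (v : Path B (φ.obj Y)) (α : Path X Y)
      (u : Path (φ.obj X) B), φ.mapPath α = u.comp v →
      ∃ (Z : H) (_ : φ.obj Z = B) (β : Path X Z) (γ : Path Z Y),
        β.comp γ = α ∧ HEq (φ.mapPath β) u ∧ HEq (φ.mapPath γ) v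
  | X, Y, _, Path.nil, α, u, h =>
      ⟨Y, rfl, α, Path.nil, Path.comp_nil α, heq_of_eq (by simpa using h), HEq.rfl⟩
  | X, Y, _, Path.cons w a, α, u, h => by
      cases α with
      | nil =>
          exfalso
          have := congrArg Path.length h
          simp [Path.length_comp] at this
      | cons α' a₀ =>
          rw [Prefunctor.mapPath_cons, Path.comp_cons] at h
          injection h with h1 h2 h3 h4
          subst h1
          obtain ⟨Z, e, β, γ, hcomp, hβ, hγ⟩ := path_split_exists φ w α' u (eq_of_heq h3)
          refine ⟨Z, e, β, γ.cons a₀, by rw [Path.comp_cons, hcomp], hβ, ?_⟩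
          subst e
          rw [Prefunctor.mapPath_cons, eq_of_heq hγ, eq_of_heq h4]

lemma eqToHom_paths_length {G : Type u'} [Quiver.{v'+1} G] {a b : Paths G} (e : a = b) :
    Quiver.Path.length (eqToHom e : a ⟶ b) = 0 := by subst e; rfl

lemma eqToHom_comp_paths_length {G : Type u'} [Quiver.{v'+1} G] {a b c : Paths G} (e : a = b)
    (q : b ⟶ c) : Quiver.Path.length (eqToHom e ≫ q) = Quiver.Path.length q := by
  subst e; simp

theorem pathsFunctor_isULF {H : Type u} {G : Type u'} [Quiver.{v + 1} H] [Quiver.{v' + 1} G]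
    (φ : H ⥤q G) : IsULF (pathsFunctor φ) := by
  intro X Y α B u v h
  obtain ⟨Z, e, β, γ, hcomp, hβ, hγ⟩ := path_split_exists φ v α u h
  subst e
  refine ⟨⟨Z, β, γ⟩, ⟨rfl, hcomp, ?_, ?_⟩, ?_⟩
  · simp only [eqToHom_refl, Category.comp_id]; exact eq_of_heq hβ
  · exact (eq_of_heq hγ).trans (Category.id_comp v).symm
  · rintro ⟨Z', β', γ'⟩ ⟨e', hc', hu', hv'⟩
    have hlγ' : Quiver.Path.length γ' = Quiver.Path.length v := by
      have := (congrArg Quiver.Path.length hv').trans (eqToHom_comp_paths_length e' v)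
      exact (mapPath_length φ γ').symm.trans this
    have hlγ : Quiver.Path.length γ = Quiver.Path.length v := by
      rw [← mapPath_length φ γ, eq_of_heq hγ]
      rfl
    obtain ⟨rfl, hb, hg⟩ := path_split_unique γ' γ β' β (hc'.trans hcomp.symm)
      (hlγ'.trans hlγ.symm)
    rw [eq_of_heq hb, eq_of_heq hg]
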